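/- Let $\kappa_1>1$ and for $p\in\mathbb{R}^2$ define $\Delta(p) = \dfrac{1}{1+|p|^2}\left(1 - \kappa_1\sqrt{1+\left(1-\kappa_1^{-2}\right)|p|^2}\right)$ and the refracted direction $m_1(p) = \dfrac{1}{\kappa_1}\big(\Delta(p)\,p,\; 1-\Delta(p)\big)\in\mathbb{R}^3$. Then there exists a constant $M$ depending only on $\kappa_1$ such that $|m_1(p)-m_1(q)| \le M\,|p-q|$ for all $p,q\in\mathbb{R}^2$. -/

import Mathlib

noncomputable section

/-- Euclidean inner product in `ℝ³`. -/
def dot3 (x y : Fin 3 → ℝ) : ℝ := x 0 * y 0 + x 1 * y 1 + x 2 * y 2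

/-- Euclidean norm in `ℝ³`. -/
def norm3 (x : Fin 3 → ℝ) : ℝ := Real.sqrt (dot3 x x)

/-- Euclidean inner product in `ℝ²`. -/
def dot2 (x y : Fin 2 → ℝ) : ℝ := x 0 * y 0 + x 1 * y 1

/-- Euclidean norm in `ℝ²`. -/
def norm2 (x : Fin 2 → ℝ) : ℝ := Real.sqrt (dot2 x x)

/-- The embedding `x = (x₁,x₂) ↦ (x₁,x₂,0)` of the source plane into `ℝ³`. -/
def lift2 (x : Fin 2 → ℝ) : Fin 3 → ℝ := ![x 0, x 1, 0]

/-- Cross product in `ℝ³`. -/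
def cross3 (x y : Fin 3 → ℝ) : Fin 3 → ℝ :=
  ![x 1 * y 2 - x 2 * y 1, x 2 * y 0 - x 0 * y 2, x 0 * y 1 - x 1 * y 0]

/-- Partial derivative `∂f/∂xᵢ` of a scalar function on `ℝ²`. -/
def pd (i : Fin 2) (f : (Fin 2 → ℝ) → ℝ) (x : Fin 2 → ℝ) : ℝ :=
  fderiv ℝ f x (Pi.single i 1)

/-- Gradient of a scalar function on `ℝ²`. -/
def grad2 (f : (Fin 2 → ℝ) → ℝ) (x : Fin 2 → ℝ) : Fin 2 → ℝ :=
  ![pd 0 f x, pd 1 f x]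

/-- Two-dimensional curl of a plane field: `curl V = ∂V₂/∂x₁ - ∂V₁/∂x₂`. -/
def curl2 (V : (Fin 2 → ℝ) → (Fin 2 → ℝ)) (x : Fin 2 → ℝ) : ℝ :=
  pd 0 (fun y => V y 1) x - pd 1 (fun y => V y 0) x

/-- Two-dimensional cross product `a × b = a₁b₂ - a₂b₁`. -/
def cross2v (a b : Fin 2 → ℝ) : ℝ := a 0 * b 1 - a 1 * b 0

end

section Helpers

lemma norm2_eq' (x : Fin 2 → ℝ) : norm2 x = Real.sqrt (x 0 ^ 2 + x 1 ^ 2) := by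
  rw [norm2, dot2]; congr 1; ring

lemma norm2_nonneg' (x : Fin 2 → ℝ) : 0 ≤ norm2 x := Real.sqrt_nonneg _

lemma abs_comp_le2 (x : Fin 2 → ℝ) (i : Fin 2) : |x i| ≤ norm2 x := by
  rw [norm2_eq', ← Real.sqrt_sq_eq_abs]
  apply Real.sqrt_le_sqrt
  fin_cases i
  · show x 0 ^ 2 ≤ _; nlinarith [sq_nonneg (x 1)]
  · show x 1 ^ 2 ≤ _; nlinarith [sq_nonneg (x 0)]

lemma norm2_tri (x y : Fin 2 → ℝ) : norm2 x ≤ norm2 y + norm2 (x - y) := by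
  have hxy : ∀ i, (x - y) i = x i - y i := fun i => rfl
  set A := norm2 y with hA
  set B := norm2 (x - y) with hB
  have hAn : 0 ≤ A := Real.sqrt_nonneg _
  have hBn : 0 ≤ B := Real.sqrt_nonneg _
  have hA2 : A ^ 2 = y 0 ^ 2 + y 1 ^ 2 := by
    rw [hA, norm2_eq']; exact Real.sq_sqrt (by positivity)
  have hB2 : B ^ 2 = (x 0 - y 0) ^ 2 + (x 1 - y 1) ^ 2 := by
    rw [hB, norm2_eq', hxy, hxy]; exact Real.sq_sqrt (by positivity)
  set u := x 0 - y 0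
  set v := x 1 - y 1
  have hs : (y 0 * u + y 1 * v) ^ 2 ≤ (A * B) ^ 2 := by
    rw [mul_pow, hA2, hB2]; nlinarith [sq_nonneg (y 0 * v - y 1 * u)]
  have key : y 0 * u + y 1 * v ≤ A * B := by
    calc y 0 * u + y 1 * v ≤ |y 0 * u + y 1 * v| := le_abs_self _
      _ ≤ |A * B| := by
          rw [← Real.sqrt_sq_eq_abs, ← Real.sqrt_sq_eq_abs]
          exact Real.sqrt_le_sqrt hs
      _ = A * B := abs_of_nonneg (mul_nonneg hAn hBn)
  have hfin : x 0 ^ 2 + x 1 ^ 2 ≤ (A + B) ^ 2 := by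
    have hx0 : x 0 = y 0 + u := by simp [u]
    have hx1 : x 1 = y 1 + v := by simp [v]
    rw [hx0, hx1]; nlinarith [key, hA2, hB2]
  calc norm2 x = Real.sqrt (x 0 ^ 2 + x 1 ^ 2) := norm2_eq' x
    _ ≤ Real.sqrt ((A + B) ^ 2) := Real.sqrt_le_sqrt hfin
    _ = A + B := Real.sqrt_sq (by positivity)

lemma norm2_sub_comm (x y : Fin 2 → ℝ) : norm2 (x - y) = norm2 (y - x) := by
  rw [norm2_eq', norm2_eq']
  have h0 : (x - y) 0 = -((y - x) 0) := by simp
  have h1 : (x - y) 1 = -((y - x) 1) := by simp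
  rw [h0, h1]; congr 1; ring

lemma norm3_le_sum (v : Fin 3 → ℝ) : norm3 v ≤ |v 0| + |v 1| + |v 2| := by
  rw [norm3]
  have h : dot3 v v ≤ (|v 0| + |v 1| + |v 2|) ^ 2 := by
    rw [dot3]
    nlinarith [sq_abs (v 0), sq_abs (v 1), sq_abs (v 2),
      mul_nonneg (abs_nonneg (v 0)) (abs_nonneg (v 1)),
      mul_nonneg (abs_nonneg (v 0)) (abs_nonneg (v 2)),
      mul_nonneg (abs_nonneg (v 1)) (abs_nonneg (v 2))]
  calc Real.sqrt (dot3 v v) ≤ Real.sqrt ((|v 0| + |v 1| + |v 2|) ^ 2) := Real.sqrt_le_sqrt h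
    _ = |v 0| + |v 1| + |v 2| := Real.sqrt_sq (by positivity)

lemma sqrt_lip (k c a b : ℝ) (hk : 0 < k) (hc : 0 < c) (hb : 0 ≤ b) (hab : b ≤ a) :
    Real.sqrt (k + c * a ^ 2) ≤ Real.sqrt (k + c * b ^ 2) + Real.sqrt c * (a - b) := by
  set B := Real.sqrt (k + c * b ^ 2) with hB
  have hBn : 0 ≤ B := Real.sqrt_nonneg _
  have hB2 : B ^ 2 = k + c * b ^ 2 := Real.sq_sqrt (by positivity)
  have hcs : Real.sqrt c ^ 2 = c := Real.sq_sqrt hc.le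
  have hcsn : 0 ≤ Real.sqrt c := Real.sqrt_nonneg _
  have hcb : c * b ≤ Real.sqrt c * B := by
    have h1 : (c * b) ^ 2 ≤ (Real.sqrt c * B) ^ 2 := by
      rw [mul_pow, mul_pow, hcs, hB2]; nlinarith
    calc c * b ≤ |c * b| := le_abs_self _
      _ ≤ |Real.sqrt c * B| := by
          rw [← Real.sqrt_sq_eq_abs, ← Real.sqrt_sq_eq_abs]
          exact Real.sqrt_le_sqrt h1
      _ = _ := abs_of_nonneg (mul_nonneg hcsn hBn)
  have ht : (Real.sqrt c * (a - b)) ^ 2 = c * (a - b) ^ 2 := by rw [mul_pow, hcs]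
  have key : k + c * a ^ 2 ≤ (B + Real.sqrt c * (a - b)) ^ 2 := by
    nlinarith [mul_le_mul_of_nonneg_right hcb (sub_nonneg.mpr hab), ht]
  calc Real.sqrt (k + c * a ^ 2) ≤ Real.sqrt ((B + Real.sqrt c * (a - b)) ^ 2) :=
        Real.sqrt_le_sqrt key
    _ = B + Real.sqrt c * (a - b) := Real.sqrt_sq
        (by nlinarith [mul_nonneg hcsn (sub_nonneg.mpr hab)])

end Helpers

/-- Lipschitz estimate for the refracted direction of a vertical ray:
there is `M = M(κ₁)` with `|m₁(p) - m₁(q)| ≤ M |p - q|`. -/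
theorem refracted_direction_lipschitz (κ1 : ℝ) (hκ1 : 1 < κ1)
    (Δ : (Fin 2 → ℝ) → ℝ)
    (hΔ : ∀ p, Δ p = (1 + norm2 p ^ 2)⁻¹ *
        (1 - κ1 * Real.sqrt (1 + (1 - (κ1 ^ 2)⁻¹) * norm2 p ^ 2)))
    (m1 : (Fin 2 → ℝ) → (Fin 3 → ℝ))
    (hm1 : ∀ p, m1 p = κ1⁻¹ • ![Δ p * p 0, Δ p * p 1, 1 - Δ p]) :
    ∃ M : ℝ, ∀ p q : Fin 2 → ℝ, norm3 (m1 p - m1 q) ≤ M * norm2 (p - q) := by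
  have hκ0 : (0:ℝ) < κ1 := lt_trans one_pos hκ1
  set c : ℝ := κ1 ^ 2 - 1 with hc_def
  have hc : 0 < c := by nlinarith
  set sc : ℝ := Real.sqrt c with hsc_def
  have hsc : 0 < sc := Real.sqrt_pos.mpr hc
  have hsc2 : sc ^ 2 = c := Real.sq_sqrt hc.le
  set S : (Fin 2 → ℝ) → ℝ := fun p => Real.sqrt (κ1 ^ 2 + c * norm2 p ^ 2) with hS_def
  have hSarg : ∀ p : Fin 2 → ℝ, 0 ≤ κ1 ^ 2 + c * norm2 p ^ 2 := fun p => by positivity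
  have hSge : ∀ p : Fin 2 → ℝ, κ1 ≤ S p := by
    intro p
    have h1 : κ1 = Real.sqrt (κ1 ^ 2) := (Real.sqrt_sq hκ0.le).symm
    rw [h1]
    exact Real.sqrt_le_sqrt (by nlinarith [sq_nonneg (norm2 p)])
  have hS0 : ∀ p : Fin 2 → ℝ, 0 < 1 + S p := fun p => by nlinarith [hSge p]
  have hSn : ∀ p : Fin 2 → ℝ, sc * norm2 p ≤ S p := by
    intro p
    have h1 : (sc * norm2 p) ^ 2 ≤ κ1 ^ 2 + c * norm2 p ^ 2 := by
      rw [mul_pow, hsc2]; nlinarith [sq_nonneg κ1]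
    calc sc * norm2 p = Real.sqrt ((sc * norm2 p) ^ 2) :=
          (Real.sqrt_sq (mul_nonneg hsc.le (norm2_nonneg' p))).symm
      _ ≤ S p := Real.sqrt_le_sqrt h1
  -- rewrite Δ
  have hΔ' : ∀ p, Δ p = (1 - κ1 ^ 2) / (1 + S p) := by
    intro p
    have ht : (0:ℝ) ≤ norm2 p ^ 2 := sq_nonneg _
    have hinner : (0:ℝ) ≤ 1 + (1 - (κ1 ^ 2)⁻¹) * norm2 p ^ 2 := by
      have hk2 : (1:ℝ) ≤ κ1 ^ 2 := by nlinarith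
      have h2 : (κ1 ^ 2)⁻¹ ≤ 1 := inv_le_one_of_one_le₀ hk2
      nlinarith
    have hstep : κ1 * Real.sqrt (1 + (1 - (κ1 ^ 2)⁻¹) * norm2 p ^ 2) = S p := by
      have h3 : κ1 ^ 2 * (1 + (1 - (κ1 ^ 2)⁻¹) * norm2 p ^ 2)
          = κ1 ^ 2 + c * norm2 p ^ 2 := by
        rw [hc_def]; field_simp; try ring
      have h4 : S p
          = Real.sqrt (κ1 ^ 2) * Real.sqrt (1 + (1 - (κ1 ^ 2)⁻¹) * norm2 p ^ 2) := by
        show Real.sqrt (κ1 ^ 2 + c * norm2 p ^ 2) = _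
        rw [← Real.sqrt_mul (sq_nonneg κ1), h3]
      rw [h4, Real.sqrt_sq hκ0.le]
    have hsq : S p ^ 2 = κ1 ^ 2 + c * norm2 p ^ 2 := Real.sq_sqrt (hSarg p)
    have h1t : (0:ℝ) < 1 + norm2 p ^ 2 := by nlinarith
    rw [hΔ p, hstep]
    rw [inv_mul_eq_div, div_eq_div_iff h1t.ne' (hS0 p).ne']
    have : c = κ1 ^ 2 - 1 := hc_def
    nlinarith [hsq]
  have hΔbound : ∀ p, |Δ p| ≤ c := by
    intro p
    rw [hΔ' p, abs_div, abs_of_pos (hS0 p)]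
    have h1 : |1 - κ1 ^ 2| = c := by rw [abs_of_nonpos (by nlinarith)]; rw [hc_def]; ring
    rw [h1, div_le_iff₀ (hS0 p)]
    nlinarith [hSge p]
  refine ⟨4 * c + c * sc, fun p q => ?_⟩
  set d : ℝ := norm2 (p - q) with hd_def
  have hd : 0 ≤ d := norm2_nonneg' _
  -- Lipschitz of S
  have hmono : ∀ x y : Fin 2 → ℝ, norm2 x ≤ norm2 y → S x ≤ S y := by
    intro x y h
    exact Real.sqrt_le_sqrt (by
      nlinarith [mul_le_mul h h (norm2_nonneg' x) (norm2_nonneg' y),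
        mul_le_mul_of_nonneg_left (mul_le_mul h h (norm2_nonneg' x) (norm2_nonneg' y)) hc.le])
  have honeside : ∀ x y : Fin 2 → ℝ, S x - S y ≤ sc * norm2 (x - y) := by
    intro x y
    rcases le_total (norm2 x) (norm2 y) with h | h
    · have := hmono x y h
      nlinarith [norm2_nonneg' (x - y)]
      
    · have h1 := sqrt_lip (κ1 ^ 2) c (norm2 x) (norm2 y) (by positivity) hc
        (norm2_nonneg' y) h
      have h2 : norm2 x - norm2 y ≤ norm2 (x - y) := by
        have := norm2_tri x y; linarith
      have h3 : sc * (norm2 x - norm2 y) ≤ sc * norm2 (x - y) :=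
        mul_le_mul_of_nonneg_left h2 hsc.le
      rw [← hsc_def] at h1
      show Real.sqrt (κ1 ^ 2 + c * norm2 x ^ 2) - Real.sqrt (κ1 ^ 2 + c * norm2 y ^ 2)
          ≤ sc * norm2 (x - y)
      linarith
  have hlipS : |S p - S q| ≤ sc * d := by
    rw [abs_sub_le_iff]
    constructor
    · exact honeside p q
    · have := honeside q p; rw [norm2_sub_comm q p] at this; exact this
  -- difference of Δ
  have hDpos : 0 < (1 + S p) * (1 + S q) := mul_pos (hS0 p) (hS0 q)
  have hdiffΔ : Δ p - Δ q = c * (S p - S q) / ((1 + S p) * (1 + S q)) := by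
    rw [hΔ' p, hΔ' q, hc_def]
    rw [div_sub_div _ _ (hS0 p).ne' (hS0 q).ne']
    ring
  have habsΔ : |Δ p - Δ q| = c * |S p - S q| / ((1 + S p) * (1 + S q)) := by
    rw [hdiffΔ, abs_div, abs_mul, abs_of_pos hc, abs_of_pos hDpos]
  have hD1 : 1 ≤ (1 + S p) * (1 + S q) := by nlinarith [hSge p, hSge q]
  have bound1 : |Δ p - Δ q| ≤ c * sc * d := by
    rw [habsΔ, div_le_iff₀ hDpos]
    have h1 : c * |S p - S q| ≤ c * (sc * d) := mul_le_mul_of_nonneg_left hlipS hc.le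
    have h2 : (c * sc * d) * 1 ≤ (c * sc * d) * ((1 + S p) * (1 + S q)) :=
      mul_le_mul_of_nonneg_left hD1 (by positivity)
    nlinarith
  have bound2 : |Δ p - Δ q| * norm2 q ≤ c * d := by
    rw [habsΔ, div_mul_eq_mul_div, div_le_iff₀ hDpos]
    have h1 : |S p - S q| * norm2 q ≤ (sc * d) * norm2 q :=
      mul_le_mul_of_nonneg_right hlipS (norm2_nonneg' q)
    have h1' : c * (|S p - S q| * norm2 q) ≤ c * ((sc * d) * norm2 q) :=
      mul_le_mul_of_nonneg_left h1 hc.le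
    have h2 : c * d * (sc * norm2 q) ≤ c * d * (1 + S q) :=
      mul_le_mul_of_nonneg_left (by linarith [hSn q, hSge q]) (mul_nonneg hc.le hd)
    have h3 : (c * d * (1 + S q)) * 1 ≤ (c * d * (1 + S q)) * (1 + S p) :=
      mul_le_mul_of_nonneg_left (by linarith [hSge p]) (by positivity)
    nlinarith
  -- components
  have hκinv : κ1⁻¹ ≤ 1 := inv_le_one_of_one_le₀ hκ1.le
  have hκinvpos : 0 < κ1⁻¹ := inv_pos.mpr hκ0
  have hsub : ∀ i, (m1 p - m1 q) i = m1 p i - m1 q i := fun i => rfl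
  have h0 : (m1 p - m1 q) 0 = κ1⁻¹ * (Δ p * p 0 - Δ q * q 0) := by
    rw [hsub, hm1 p, hm1 q]
    simp only [Pi.smul_apply, smul_eq_mul, Matrix.cons_val_zero]
    ring
  have h1 : (m1 p - m1 q) 1 = κ1⁻¹ * (Δ p * p 1 - Δ q * q 1) := by
    rw [hsub, hm1 p, hm1 q]
    simp only [Pi.smul_apply, smul_eq_mul, Matrix.cons_val_one, Matrix.head_cons, Matrix.cons_val_zero]
    ring
  have h2 : (m1 p - m1 q) 2 = κ1⁻¹ * (Δ q - Δ p) := by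
    rw [hsub, hm1 p, hm1 q]
    have e : ∀ a b c : ℝ, (![a, b, c] : Fin 3 → ℝ) 2 = c := fun a b c => rfl
    simp only [Pi.smul_apply, smul_eq_mul, e]
    ring
  have hcomp : ∀ i : Fin 2, |Δ p * p i - Δ q * q i| ≤ 2 * c * d := by
    intro i
    have hsplit : Δ p * p i - Δ q * q i = Δ p * (p i - q i) + (Δ p - Δ q) * q i := by ring
    have hpq : |p i - q i| ≤ d := by
      have := abs_comp_le2 (p - q) i
      simpa using this
    have hq : |q i| ≤ norm2 q := abs_comp_le2 q i
    calc |Δ p * p i - Δ q * q i|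
        ≤ |Δ p * (p i - q i)| + |(Δ p - Δ q) * q i| := by rw [hsplit]; exact abs_add_le _ _
      _ = |Δ p| * |p i - q i| + |Δ p - Δ q| * |q i| := by rw [abs_mul, abs_mul]
      _ ≤ c * d + c * d := by
          have e1 : |Δ p| * |p i - q i| ≤ c * d :=
            mul_le_mul (hΔbound p) hpq (abs_nonneg _) hc.le
          have e2 : |Δ p - Δ q| * |q i| ≤ c * d := by
            calc |Δ p - Δ q| * |q i| ≤ |Δ p - Δ q| * norm2 q :=
                  mul_le_mul_of_nonneg_left hq (abs_nonneg _)
              _ ≤ c * d := bound2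
          linarith
      _ = 2 * c * d := by ring
  have hb0 : |(m1 p - m1 q) 0| ≤ 2 * c * d := by
    rw [h0, abs_mul, abs_of_pos hκinvpos]
    calc κ1⁻¹ * |Δ p * p 0 - Δ q * q 0| ≤ 1 * |Δ p * p 0 - Δ q * q 0| :=
          mul_le_mul_of_nonneg_right hκinv (abs_nonneg _)
      _ = |Δ p * p 0 - Δ q * q 0| := one_mul _
      _ ≤ 2 * c * d := hcomp 0
  have hb1 : |(m1 p - m1 q) 1| ≤ 2 * c * d := by
    rw [h1, abs_mul, abs_of_pos hκinvpos]
    calc κ1⁻¹ * |Δ p * p 1 - Δ q * q 1| ≤ 1 * |Δ p * p 1 - Δ q * q 1| :=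
          mul_le_mul_of_nonneg_right hκinv (abs_nonneg _)
      _ = |Δ p * p 1 - Δ q * q 1| := one_mul _
      _ ≤ 2 * c * d := hcomp 1
  have hb2 : |(m1 p - m1 q) 2| ≤ c * sc * d := by
    rw [h2, abs_mul, abs_of_pos hκinvpos]
    calc κ1⁻¹ * |Δ q - Δ p| ≤ 1 * |Δ q - Δ p| :=
          mul_le_mul_of_nonneg_right hκinv (abs_nonneg _)
      _ = |Δ p - Δ q| := by rw [one_mul, abs_sub_comm]
      _ ≤ c * sc * d := bound1
  calc norm3 (m1 p - m1 q) ≤ |(m1 p - m1 q) 0| + |(m1 p - m1 q) 1| + |(m1 p - m1 q) 2| :=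
        norm3_le_sum _
    _ ≤ 2 * c * d + (2 * c * d) + c * sc * d := by linarith
    _ = (4 * c + c * sc) * d := by ring
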